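/- Let a, d, ψ be positive integers with a² + d² = ψ² and d > 0. Then the polynomial a·X² + 2aψ·X + a³ (with integer coefficients) has two distinct integer roots. -/
import Mathlib

open Polynomial in
theorem quadratic_from_pythagorean_triple_two_distinct_integer_roots
    (a d ψ : ℤ) (ha : 0 < a) (hψ : 0 < ψ) (hd : 0 < d)
    (hpyth : a ^ 2 + d ^ 2 = ψ ^ 2) :
    ∃ x₁ x₂ : ℤ, x₁ ≠ x₂ ∧
      (C a * X ^ 2 + C (2 * a * ψ) * X + C (a ^ 3)).IsRoot x₁ ∧
      (C a * X ^ 2 + C (2 * a * ψ) * X + C (a ^ 3)).IsRoot x₂ := by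
  refine ⟨-ψ + d, -ψ - d, by omega, ?_, ?_⟩ <;>
  · simp only [IsRoot, eval_add, eval_mul, eval_pow, eval_C, eval_X]
    nlinarith [hpyth]
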